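/- The number of well-labeled forests with σ trees and n total tree edges equals 3^n · (σ/(2n+σ)) · C(2n+σ, n). -/

import Mathlib

/-- Rooted plane trees whose edges carry integer label increments: a well-labeled tree is
determined by its root label `0` together with the increment (in `{-1,0,1}`) along each edge. -/
inductive LTree : Type
  | node : List (ℤ × LTree) → LTree

mutual
  /-- Number of edges of a labeled plane tree. -/
  def LTree.edges : LTree → ℕ
    | .node ts => ts.length + LTree.edgesList ts
  /-- Total number of edges of a list of labeled subtrees. -/
  def LTree.edgesList : List (ℤ × LTree) → ℕ
    | [] => 0
    | (_, t) :: ts => LTree.edges t + LTree.edgesList ts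
end

mutual
  /-- All edge label increments lie in `{-1, 0, 1}` (labels of adjacent vertices differ by at
  most `1`). -/
  def LTree.wellLabeled : LTree → Prop
    | .node ts => LTree.wellLabeledList ts
  /-- `wellLabeled` for a list of labeled subtrees. -/
  def LTree.wellLabeledList : List (ℤ × LTree) → Prop
    | [] => True
    | (c, t) :: ts => (c = -1 ∨ c = 0 ∨ c = 1) ∧ LTree.wellLabeled t ∧ LTree.wellLabeledList ts
end

abbrev Inc := {c : ℤ // c = -1 ∨ c = 0 ∨ c = 1}

def WLF (σ n : ℕ) := {f : List LTree //
    f.length = σ ∧ (f.map LTree.edges).sum = n ∧ ∀ t ∈ f, t.wellLabeled}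

def WLF.fwd (σ n : ℕ) : WLF (σ+1) (n+1) → WLF σ (n+1) ⊕ Inc × WLF (σ+2) n
  | ⟨[], h⟩ => absurd h.1 (by simp)
  | ⟨.node [] :: rest, h⟩ => Sum.inl ⟨rest, by
      obtain ⟨h1, h2, h3⟩ := h
      refine ⟨by simpa using h1, ?_, fun t ht => h3 t (List.mem_cons_of_mem _ ht)⟩
      simpa [LTree.edges, LTree.edgesList] using h2⟩
  | ⟨.node ((c, t) :: ts) :: rest, h⟩ =>
      Sum.inr (⟨c, by
        have := h.2.2 _ (List.mem_cons_self)
        simp only [LTree.wellLabeled, LTree.wellLabeledList] at this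
        exact this.1⟩,
      ⟨t :: .node ts :: rest, by
        obtain ⟨h1, h2, h3⟩ := h
        have hw := h3 _ (List.mem_cons_self)
        simp only [LTree.wellLabeled, LTree.wellLabeledList] at hw
        refine ⟨by simpa using h1, ?_, ?_⟩
        · simp only [List.map_cons, List.sum_cons, List.length_cons, LTree.edges,
            LTree.edgesList] at h2 ⊢
          omega
        · intro u hu
          rw [List.mem_cons] at hu
          rcases hu with rfl | hu
          · exact hw.2.1
          · rw [List.mem_cons] at hu
            rcases hu with rfl | hu
            · simpa [LTree.wellLabeled] using hw.2.2
            · exact h3 u (List.mem_cons_of_mem _ hu)⟩)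

def WLF.bwd (σ n : ℕ) : WLF σ (n+1) ⊕ Inc × WLF (σ+2) n → WLF (σ+1) (n+1)
  | Sum.inl ⟨rest, h⟩ => ⟨.node [] :: rest, by
      obtain ⟨h1, h2, h3⟩ := h
      refine ⟨by simpa using h1, ?_, ?_⟩
      · simpa [LTree.edges, LTree.edgesList] using h2
      · intro u hu
        rw [List.mem_cons] at hu
        rcases hu with rfl | hu
        · simp [LTree.wellLabeled, LTree.wellLabeledList]
        · exact h3 u hu⟩
  | Sum.inr (c, ⟨[], h⟩) => absurd h.1 (by simp)
  | Sum.inr (c, ⟨[t], h⟩) => absurd h.1 (by simp)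
  | Sum.inr (c, ⟨t :: .node ts :: rest, h⟩) => ⟨.node ((c.1, t) :: ts) :: rest, by
      obtain ⟨h1, h2, h3⟩ := h
      refine ⟨by simpa using h1, ?_, ?_⟩
      · simp only [List.map_cons, List.sum_cons, List.length_cons, LTree.edges,
          LTree.edgesList] at h2 ⊢
        omega
      · intro u hu
        rw [List.mem_cons] at hu
        rcases hu with rfl | hu
        · simp only [LTree.wellLabeled, LTree.wellLabeledList]
          exact ⟨c.2, h3 _ (List.mem_cons_self), by
            have := h3 (.node ts) (List.mem_cons_of_mem _ (List.mem_cons_self))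
            simpa [LTree.wellLabeled] using this⟩
        · exact h3 u (List.mem_cons_of_mem _ (List.mem_cons_of_mem _ hu))⟩

def WLF.equiv (σ n : ℕ) : WLF (σ+1) (n+1) ≃ WLF σ (n+1) ⊕ Inc × WLF (σ+2) n where
  toFun := WLF.fwd σ n
  invFun := WLF.bwd σ n
  left_inv := by
    rintro ⟨_ | ⟨⟨_ | ⟨⟨c, t⟩, ts⟩⟩, rest⟩, h⟩
    · exact absurd h.1 (by simp)
    · rfl
    · rfl
  right_inv := by
    rintro (⟨rest, h⟩ | ⟨c, ⟨_ | ⟨t, _ | ⟨⟨ts⟩, g⟩⟩, h⟩⟩)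
    · rfl
    · exact absurd h.1 (by simp)
    · exact absurd h.1 (by simp)
    · rfl

lemma LTree.eq_of_edges_zero : ∀ t : LTree, t.edges = 0 → t = .node []
  | .node [], _ => rfl
  | .node (x :: ts), h => by
    simp [LTree.edges] at h

instance WLF.sub0 (n : ℕ) : Subsingleton (WLF 0 n) := by
  constructor
  rintro ⟨f, h⟩ ⟨g, h'⟩
  have : f = [] := List.length_eq_zero_iff.mp h.1
  have : g = [] := List.length_eq_zero_iff.mp h'.1
  subst_vars
  rfl

instance WLF.subz (σ : ℕ) : Subsingleton (WLF σ 0) := by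
  constructor
  rintro ⟨f, h1, h2, h3⟩ ⟨g, h1', h2', h3'⟩
  have hf : f = List.replicate σ (.node []) := by
    rw [List.eq_replicate_iff]
    refine ⟨h1, fun t ht => LTree.eq_of_edges_zero t ?_⟩
    have := List.sum_eq_zero_iff.mp h2 (t.edges) (List.mem_map_of_mem ht)
    exact this
  have hg : g = List.replicate σ (.node []) := by
    rw [List.eq_replicate_iff]
    refine ⟨h1', fun t ht => LTree.eq_of_edges_zero t ?_⟩
    exact List.sum_eq_zero_iff.mp h2' (t.edges) (List.mem_map_of_mem ht)
  exact Subtype.ext (hf.trans hg.symm)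

instance Inc.fin : Finite Inc := by
  have : ∀ c : Inc, (c : ℤ) ∈ ({-1, 0, 1} : Finset ℤ) := by
    rintro ⟨c, rfl | rfl | rfl⟩ <;> decide
  exact Finite.of_injective (fun c => (⟨c.1, this c⟩ : ({-1,0,1} : Finset ℤ)))
    (fun a b h => Subtype.ext (by simpa using congrArg Subtype.val h))

lemma WLF.finite : ∀ n σ, Finite (WLF σ n)
  | n, 0 => Finite.of_subsingleton
  | 0, σ+1 => Finite.of_subsingleton
  | n+1, σ+1 => by
    haveI i1 := WLF.finite (n+1) σ
    haveI i2 := WLF.finite n (σ+2)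
    exact Finite.of_equiv _ (WLF.equiv σ n).symm
  termination_by n σ => (n, σ)

lemma Inc.card : Nat.card Inc = 3 := by
  have e : Inc ≃ {x // x ∈ ({-1, 0, 1} : Finset ℤ)} :=
    Equiv.subtypeEquivRight (by intro x; simp [or_assoc])
  rw [Nat.card_congr e, Nat.card_eq_finsetCard]
  decide

lemma WLF.card_zero (n : ℕ) : Nat.card (WLF 0 (n+1)) = 0 := by
  have : IsEmpty (WLF 0 (n+1)) := by
    constructor
    rintro ⟨f, h1, h2, h3⟩
    have : f = [] := List.length_eq_zero_iff.mp h1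
    subst this
    simp at h2
  exact Nat.card_of_isEmpty

lemma WLF.card_n0 (σ : ℕ) : Nat.card (WLF σ 0) = 1 := by
  have : Nonempty (WLF σ 0) := by
    refine ⟨⟨List.replicate σ (.node []), by simp, ?_, ?_⟩⟩
    · simp [LTree.edges, LTree.edgesList]
    · intro t ht
      rw [List.eq_of_mem_replicate ht]
      simp [LTree.wellLabeled, LTree.wellLabeledList]
  exact Nat.card_unique

lemma WLF.card_rec (σ n : ℕ) :
    Nat.card (WLF (σ+1) (n+1)) = Nat.card (WLF σ (n+1)) + 3 * Nat.card (WLF (σ+2) n) := by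
  haveI := WLF.finite (n+1) σ
  haveI := WLF.finite n (σ+2)
  rw [Nat.card_congr (WLF.equiv σ n), Nat.card_sum, Nat.card_prod, Inc.card]

lemma WLF.main : ∀ n s : ℕ, (Nat.card (WLF (s+1) n) : ℤ) * (2*n+s+1)
    = 3^n * (s+1) * ((2*n+s+1).choose n) := by
  intro n
  induction n using Nat.strong_induction_on with
  | _ n ih =>
    match n with
    | 0 => intro s; simp [WLF.card_n0]
    | (n+1) =>
      intro s
      induction s with
      | zero =>
        have e0 : (Nat.card (WLF 1 (n+1)) : ℤ) = 3 * Nat.card (WLF 2 n) := by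
          have h := WLF.card_rec 0 n
          rw [WLF.card_zero] at h
          norm_num at h
          exact_mod_cast h
        have e2 := ih n (by omega) 1
        have e3 : ((2*(n+1)+0+1).choose (n+1) : ℤ) = (2*n+1+1).choose n + (2*n+1+1).choose (n+1) := by
          have : 2*(n+1)+0+1 = (2*n+1+1)+1 := by ring
          rw [this, Nat.choose_succ_succ]
          push_cast; ring
        have e4 : ((2*n+1+1).choose (n+1) : ℤ) * (n+1) = ((2*n+1+1).choose n) * (n+2) := by
          have := Nat.choose_succ_right_eq (2*n+1+1) n
          have h2 : 2*n+1+1 - n = n+2 := by omega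
          rw [h2] at this
          exact_mod_cast this
        apply mul_right_cancel₀ (b := (2*(n:ℤ)+2)) (by positivity)
        push_cast at e0 e2 e3 e4 ⊢
        linear_combination (2*(n:ℤ)+3)*(2*n+2)*e0 + 3*(2*(n:ℤ)+3)*e2
          - 3^(n+1)*(2*(n:ℤ)+2)*e3 - 2*3^(n+1)*e4
      | succ s ihs =>
        have e0 : (Nat.card (WLF (s+2) (n+1)) : ℤ)
            = Nat.card (WLF (s+1) (n+1)) + 3 * Nat.card (WLF (s+3) n) := by
          exact_mod_cast WLF.card_rec (s+1) n
        have e1 : (Nat.card (WLF (s+1) (n+1)) : ℤ) * (2*(n+1)+s+1)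
            = 3^(n+1) * (s+1) * ((2*(n+1)+s+1).choose (n+1)) := ihs
        have e2 := ih n (by omega) (s+2)
        have e3 : ((2*(n+1)+(s+1)+1).choose (n+1) : ℤ)
            = (2*n+s+3).choose n + (2*n+s+3).choose (n+1) := by
          have : 2*(n+1)+(s+1)+1 = (2*n+s+3)+1 := by ring
          rw [this, Nat.choose_succ_succ]
          push_cast; ring
        have e4 : ((2*n+s+3).choose (n+1) : ℤ) * (n+1) = ((2*n+s+3).choose n) * (n+s+3) := by
          have := Nat.choose_succ_right_eq (2*n+s+3) n
          have h2 : 2*n+s+3 - n = n+s+3 := by omega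
          rw [h2] at this
          exact_mod_cast this
        apply mul_right_cancel₀ (b := (2*(n:ℤ)+s+3)) (by positivity)
        have hM : (2*(n+1)+s+1 : ℕ) = 2*n+s+3 := by omega
        rw [hM] at e1
        have hM2 : (2*n+(s+2)+1 : ℕ) = 2*n+s+3 := by omega
        rw [hM2] at e2
        push_cast at e0 e1 e2 e3 e4 ⊢
        linear_combination (2*(n:ℤ)+s+3)*(2*(n:ℤ)+s+4)*e0 + (2*(n:ℤ)+s+4)*e1
          + 3*(2*(n:ℤ)+s+4)*e2 - 3^(n+1)*((s:ℤ)+2)*(2*(n:ℤ)+s+3)*e3 - 2*3^(n+1)*e4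


/-- The number of well-labeled forests with `σ` trees and `n` total edges equals
`3^n · (σ/(2n+σ)) · C(2n+σ, n)`. -/
theorem card_well_labeled_forests (σ n : ℕ) (hσ : 0 < σ) :
    (Nat.card {f : List LTree //
        f.length = σ ∧ (f.map LTree.edges).sum = n ∧ ∀ t ∈ f, t.wellLabeled} : ℝ)
      = 3 ^ n * ((σ : ℝ) / (2 * n + σ)) * (Nat.choose (2 * n + σ) n : ℝ) := by
  obtain ⟨s, rfl⟩ : ∃ s, σ = s + 1 := ⟨σ - 1, by omega⟩
  have h := WLF.main n s
  have hR : (Nat.card (WLF (s+1) n) : ℝ) * (2*n+s+1)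
      = 3^n * (s+1) * ((2*n+s+1).choose n) := by exact_mod_cast h
  have hpos : (2*(n:ℝ)+(s+1)) ≠ 0 := by positivity
  show (Nat.card (WLF (s+1) n) : ℝ) = _
  have harg : (2*n+(s+1) : ℕ) = 2*n+s+1 := by omega
  rw [harg]
  have hpos2 : (2*(n:ℝ) + ((s+1 : ℕ) : ℝ)) ≠ 0 := by push_cast; positivity
  rw [eq_comm, mul_comm, ← mul_assoc, mul_comm, div_mul_eq_mul_div, div_eq_iff hpos2]
  push_cast at hR ⊢
  linear_combination -hR
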